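/- In the automaton K_n (n > 5 odd) with state q = 0: δ(0, b a) = δ(0, a b^{n-1}); for 2 ≤ m ≤ n-3, δ(0, b^m a) = δ(0, a b^{m-2}); δ(0, b^{n-2} a b^2) = δ(0, a); and δ(0, b^{n-1} a) = δ(0, a b^{n-3}). -/

import Mathlib

open Finset

universe u v

variable {Q : Type u} {A : Type v}

/-- Extended transition function on words (lists of letters). -/
def dw (δ : Q → A → Q) (q : Q) (w : List A) : Q := w.foldl δ q

/-- A subset `S` of the state set is reachable if it is the image of the
full state set under some word. -/
def reach [Fintype Q] [DecidableEq Q] (δ : Q → A → Q) (S : Finset Q) : Prop :=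
  ∃ w : List A, Finset.univ.image (fun q => dw δ q w) = S

/-- Rank of a word: cardinality of the image of the state set under it. -/
def rkw [Fintype Q] [DecidableEq Q] (δ : Q → A → Q) (w : List A) : ℕ :=
  (Finset.univ.image (fun q => dw δ q w)).card

/-- Rank of a letter. -/
def rkl [Fintype Q] [DecidableEq Q] (δ : Q → A → Q) (a : A) : ℕ :=
  (Finset.univ.image (fun q => δ q a)).card

/-- A map is a cyclic permutation with a single orbit. -/
def isCyclicPerm (f : Q → Q) : Prop :=
  Function.Bijective f ∧ ∀ p q : Q, ∃ k : ℕ, f^[k] p = q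

/-- Two subsets of states are distinguishable in the power automaton:
some word maps exactly one of them to a singleton. -/
def distinguishable [DecidableEq Q] (δ : Q → A → Q) (S T : Finset Q) : Prop :=
  ∃ u : List A,
    Xor' ((S.image (fun q => dw δ q u)).card = 1)
         ((T.image (fun q => dw δ q u)).card = 1)

/-- The set of synchronizing words. -/
def Syn [Fintype Q] [DecidableEq Q] (δ : Q → A → Q) : Set (List A) :=
  {w | (Finset.univ.image (fun q => dw δ q w)).card = 1}

/-- The Nerode right-congruence of a language. -/
def nerode (L : Set (List A)) : Setoid (List A) where
  r u v := ∀ x : List A, u ++ x ∈ L ↔ v ++ x ∈ L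
  iseqv := ⟨fun _ _ => Iff.rfl, fun h x => (h x).symm, fun h1 h2 x => (h1 x).trans (h2 x)⟩

/-- State complexity of a language: number of Nerode classes. -/
noncomputable def sc (L : Set (List A)) : ℕ := Nat.card (Quotient (nerode L))

/-- Complete reachability. -/
def complReach [Fintype Q] [DecidableEq Q] (δ : Q → A → Q) : Prop :=
  ∀ S : Finset Q, S.Nonempty → ∃ w : List A, Finset.univ.image (fun q => dw δ q w) = S

/-- The permutation group generated by the permutational letters. -/
def permGroup [Fintype Q] [DecidableEq Q] (δ : Q → A → Q) : Subgroup (Equiv.Perm Q) :=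
  Subgroup.closure {π : Equiv.Perm Q | ∃ a : A, ∀ q : Q, π q = δ q a}

/-- The transition function of the automaton `K_n`; the letter `true` is `b`
(the cyclic permutation) and `false` is `a`. -/
def Kdelta (n : ℕ) [NeZero n] (i : Fin n) (c : Bool) : Fin n :=
  if c then i + 1
  else if i.val = 0 then ⟨3 % n, Nat.mod_lt 3 (NeZero.pos n)⟩
  else if i.val = n - 1 then ⟨0, NeZero.pos n⟩
  else if i.val = n - 2 then ⟨1 % n, Nat.mod_lt 1 (NeZero.pos n)⟩
  else i + 1

open Fin.NatCast Fin.CommRing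

lemma dw_cons (δ : Q → A → Q) (q : Q) (a : A) (w : List A) :
    dw δ q (a :: w) = dw δ (δ q a) w := rfl

lemma dw_append (δ : Q → A → Q) (q : Q) (w v : List A) :
    dw δ q (w ++ v) = dw δ (dw δ q w) v := List.foldl_append ..

lemma dw_single (δ : Q → A → Q) (q : Q) (a : A) : dw δ q [a] = δ q a := rfl

lemma Kdelta_true (n : ℕ) [NeZero n] (q : Fin n) : Kdelta n q true = q + 1 := rfl

lemma dw_rep_true (n : ℕ) [NeZero n] (q : Fin n) (m : ℕ) :
    dw (Kdelta n) q (List.replicate m true) = q + (m : Fin n) := by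
  induction m generalizing q with
  | zero => simp [dw]
  | succ k ih =>
      rw [List.replicate_succ, dw_cons, ih, Kdelta_true]
      push_cast
      ring

lemma Kdelta_false_mid (n : ℕ) [NeZero n] (q : Fin n) (h0 : q.val ≠ 0)
    (h1 : q.val ≠ n - 1) (h2 : q.val ≠ n - 2) : Kdelta n q false = q + 1 := by
  simp [Kdelta, h0, h1, h2]

lemma Kdelta_false_zero (n : ℕ) [NeZero n] (hn : 3 < n) :
    Kdelta n 0 false = ((3 : ℕ) : Fin n) := by
  have h0 : ((0 : Fin n)).val = 0 := rfl
  simp only [Kdelta, Bool.false_eq_true, if_false, h0, if_pos rfl, if_true]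
  apply Fin.ext
  rw [Fin.val_natCast]

lemma Kdelta_false_pen (n : ℕ) [NeZero n] (hn : 3 < n) (q : Fin n)
    (h : q.val = n - 2) : Kdelta n q false = ((1 : ℕ) : Fin n) := by
  have h0 : q.val ≠ 0 := by omega
  have h1 : q.val ≠ n - 1 := by omega
  simp only [Kdelta, Bool.false_eq_true, if_false, h,
    if_neg (show n - 2 ≠ 0 by omega), if_neg (show n - 2 ≠ n - 1 by omega), if_pos rfl, if_true]
  apply Fin.ext
  rw [Fin.val_natCast]

lemma Kdelta_false_last (n : ℕ) [NeZero n] (hn : 3 < n) (q : Fin n)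
    (h : q.val = n - 1) : Kdelta n q false = 0 := by
  have h0 : q.val ≠ 0 := by omega
  simp only [Kdelta, Bool.false_eq_true, if_false, h,
    if_neg (show n - 1 ≠ 0 by omega), if_pos rfl, if_true]
  rfl

theorem Kn_equations (n : ℕ) [NeZero n] (hodd : Odd n) (hn : 5 < n) :
    dw (Kdelta n) 0 [true, false] =
        dw (Kdelta n) 0 (false :: List.replicate (n - 1) true) ∧
    (∀ m : ℕ, 2 ≤ m → m ≤ n - 3 →
      dw (Kdelta n) 0 (List.replicate m true ++ [false]) =
        dw (Kdelta n) 0 (false :: List.replicate (m - 2) true)) ∧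
    dw (Kdelta n) 0 (List.replicate (n - 2) true ++ [false] ++ List.replicate 2 true) =
        dw (Kdelta n) 0 [false] ∧
    dw (Kdelta n) 0 (List.replicate (n - 1) true ++ [false]) =
        dw (Kdelta n) 0 (false :: List.replicate (n - 3) true) := by
  have hv : ∀ m : ℕ, m < n → ((m : ℕ) : Fin n).val = m := fun m hm => Fin.val_cast_of_lt hm
  have hnz : ((n : ℕ) : Fin n) = 0 := Fin.natCast_self n
  have hcast : ∀ m : ℕ, m ≤ n → ((n - m : ℕ) : Fin n) = - ((m : ℕ) : Fin n) := by
    intro m hm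
    have h := Nat.cast_sub (R := Fin n) hm
    rw [h, hnz]; ring
  refine ⟨?_, ?_, ?_, ?_⟩
  · show Kdelta n (Kdelta n 0 true) false
        = dw (Kdelta n) (Kdelta n 0 false) (List.replicate (n - 1) true)
    rw [Kdelta_true, dw_rep_true, Kdelta_false_zero n (by omega), hcast 1 (by omega)]
    have h01 : ((0 : Fin n) + 1) = ((1 : ℕ) : Fin n) := by push_cast; ring
    rw [h01, Kdelta_false_mid n _ (by rw [hv 1 (by omega)]; omega)
      (by rw [hv 1 (by omega)]; omega) (by rw [hv 1 (by omega)]; omega)]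
    push_cast
    ring
  · intro m hm2 hm3
    rw [dw_append, dw_rep_true]
    show Kdelta n _ false = dw (Kdelta n) (Kdelta n 0 false) (List.replicate (m - 2) true)
    have hm : (0 : Fin n) + ((m : ℕ) : Fin n) = ((m : ℕ) : Fin n) := by ring
    rw [hm, Kdelta_false_mid n _ (by rw [hv m (by omega)]; omega)
      (by rw [hv m (by omega)]; omega) (by rw [hv m (by omega)]; omega),
      dw_rep_true, Kdelta_false_zero n (by omega),
      Nat.cast_sub (R := Fin n) hm2]
    push_cast
    ring
  · rw [dw_append, dw_append, dw_rep_true, dw_rep_true]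
    simp only [dw_single]
    have hm : (0 : Fin n) + ((n - 2 : ℕ) : Fin n) = ((n - 2 : ℕ) : Fin n) := by ring
    rw [hm, Kdelta_false_pen n (by omega) _ (hv (n - 2) (by omega)),
      Kdelta_false_zero n (by omega)]
    push_cast
    ring
  · rw [dw_append, dw_rep_true]
    show Kdelta n _ false = dw (Kdelta n) (Kdelta n 0 false) (List.replicate (n - 3) true)
    have hm : (0 : Fin n) + ((n - 1 : ℕ) : Fin n) = ((n - 1 : ℕ) : Fin n) := by ring
    rw [hm, Kdelta_false_last n (by omega) _ (hv (n - 1) (by omega)),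
      dw_rep_true, Kdelta_false_zero n (by omega), hcast 3 (by omega)]
    push_cast
    ring
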